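/- Let r ≥ 1, let n_1, ..., n_r be natural numbers, and let q_1, ..., q_r be nonzero reals, p_1, ..., p_r, σ_1, ..., σ_r, ε, κ_0, κ_1, E^* real numbers satisfying E^* = ε σ_i - 2 p_i / q_i for every i. Let J ⊆ ℝ be an open interval on which β_i(s) := -q_i (s + σ_i) > 0 for all i; set v(s) = ∏_{i=1}^r β_i(s)^{n_i} and φ(s) = κ_1 (s + κ_0). Suppose α : J → ℝ is twice differentiable and satisfies α'(s) + α(s)·(v'(s)/v(s) - κ_1) = ε s + E^* on J. Then for all s ∈ J and all i: (a) (α'/2)(β_i'/β_i) + (α/2)(β_i''/β_i - (β_i'/β_i)²) + (α/2)(β_i'/β_i)(v'/v) - (α/2)(β_i'/β_i) φ' - p_i/β_i + q_i² α/(2 β_i²) = ε/2; (b) α''/2 + (α'/2)(v'/v) - (α'/2) φ' - (α/2) Σ_{i=1}^r n_i q_i²/β_i² = ε/2; (c) α''/2 + (α'/2)(v'/v) + α Σ_{i=1}^r n_i (β_i''/β_i - (1/2)(β_i'/β_i)²) - α φ'' - (α'/2) φ' = ε/2; (d) α φ'' + α' φ' + α φ' (v'/v) - α (φ')² - ε φ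 = κ_1 E^* - ε κ_1 κ_0. -/

import Mathlib

/-- The Kähler ansatz solves the full gradient Ricci soliton system:
with `βᵢ(s) = -qᵢ(s+σᵢ) > 0`, `v = ∏ βᵢ^{nᵢ}`, `φ(s) = κ₁(s+κ₀)`, the consistency
conditions `E* = ε σᵢ - 2pᵢ/qᵢ`, and `α` solving the first-order linear ODE
`α' + α (v'/v - κ₁) = ε s + E*`, equations (3.10)–(3.12) ((a)–(c)) and the first
integral (3.13) ((d)) all hold. -/
theorem stmt_15 (r : ℕ) (hr : 1 ≤ r) (n : ℕ → ℕ) (q p σ : ℕ → ℝ)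
    (hq : ∀ i ∈ Finset.Icc 1 r, q i ≠ 0)
    (ε κ0 κ1 E : ℝ)
    (hconsist : ∀ i ∈ Finset.Icc 1 r, E = ε * σ i - 2 * p i / q i)
    (a b : ℝ) (hab : a < b)
    (β : ℕ → ℝ → ℝ) (hβ : ∀ i, β i = fun s => -q i * (s + σ i))
    (hβpos : ∀ i ∈ Finset.Icc 1 r, ∀ s ∈ Set.Ioo a b, 0 < β i s)
    (v : ℝ → ℝ) (hv : v = fun s => ∏ i ∈ Finset.Icc 1 r, (β i s) ^ n i)
    (φ : ℝ → ℝ) (hφ : φ = fun s => κ1 * (s + κ0))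
    (α : ℝ → ℝ)
    (hα1 : ∀ s ∈ Set.Ioo a b, DifferentiableAt ℝ α s)
    (hα2 : ∀ s ∈ Set.Ioo a b, DifferentiableAt ℝ (deriv α) s)
    (hode : ∀ s ∈ Set.Ioo a b,
      deriv α s + α s * (deriv v s / v s - κ1) = ε * s + E) :
    ∀ s ∈ Set.Ioo a b, ∀ i ∈ Finset.Icc 1 r,
      ((deriv α s / 2) * (deriv (β i) s / β i s)
          + (α s / 2) * (deriv (deriv (β i)) s / β i s - (deriv (β i) s / β i s) ^ 2)
          + (α s / 2) * (deriv (β i) s / β i s) * (deriv v s / v s)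
          - (α s / 2) * (deriv (β i) s / β i s) * deriv φ s
          - p i / β i s + q i ^ 2 * α s / (2 * (β i s) ^ 2) = ε / 2) ∧
      (deriv (deriv α) s / 2 + (deriv α s / 2) * (deriv v s / v s)
          - (deriv α s / 2) * deriv φ s
          - (α s / 2) * ∑ j ∈ Finset.Icc 1 r, (n j : ℝ) * q j ^ 2 / (β j s) ^ 2
          = ε / 2) ∧
      (deriv (deriv α) s / 2 + (deriv α s / 2) * (deriv v s / v s)
          + α s * ∑ j ∈ Finset.Icc 1 r, (n j : ℝ) *
              (deriv (deriv (β j)) s / β j s - (1 / 2) * (deriv (β j) s / β j s) ^ 2)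
          - α s * deriv (deriv φ) s - (deriv α s / 2) * deriv φ s = ε / 2) ∧
      (α s * deriv (deriv φ) s + deriv α s * deriv φ s
          + α s * deriv φ s * (deriv v s / v s) - α s * (deriv φ s) ^ 2 - ε * φ s
          = κ1 * E - ε * κ1 * κ0) := by
  -- derivatives of β
  have hβhas : ∀ j t, HasDerivAt (β j) (-q j) t := by
    intro j t
    rw [hβ]
    simpa using ((hasDerivAt_id t).add_const (σ j)).const_mul (-q j)
  have hβd : ∀ j t, deriv (β j) t = -q j := by
    intro j t; exact (hβhas j t).deriv
  have hβdd : ∀ j t, deriv (deriv (β j)) t = 0 := by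
    intro j t
    have : deriv (β j) = fun _ => -q j := funext fun t => hβd j t
    rw [this]; simp
  -- derivatives of φ
  have hφhas : ∀ t, HasDerivAt φ κ1 t := by
    intro t; rw [hφ]
    simpa using ((hasDerivAt_id t).add_const κ0).const_mul κ1
  have hφd : ∀ t, deriv φ t = κ1 := fun t => (hφhas t).deriv
  have hφdd : ∀ t, deriv (deriv φ) t = 0 := by
    intro t
    have : deriv φ = fun _ => κ1 := funext fun t => hφd t
    rw [this]; simp
  -- nonvanishing of β on the interval
  have hβne : ∀ j ∈ Finset.Icc 1 r, ∀ t ∈ Set.Ioo a b, β j t ≠ 0 :=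
    fun j hj t ht => ne_of_gt (hβpos j hj t ht)
  -- logarithmic derivative of v
  set W : ℝ → ℝ := fun t => ∑ j ∈ Finset.Icc 1 r, (n j : ℝ) * (-q j / β j t) with hW
  have hvpos : ∀ t ∈ Set.Ioo a b, 0 < v t := by
    intro t ht
    rw [hv]
    exact Finset.prod_pos fun j hj => pow_pos (hβpos j hj t ht) _
  have hvhas : ∀ t ∈ Set.Ioo a b, HasDerivAt v (v t * W t) t := by
    intro t ht
    set g : ℝ → ℝ := fun u => ∑ j ∈ Finset.Icc 1 r, (n j : ℝ) * Real.log (β j u) with hg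
    have hgd : HasDerivAt g (W t) t := by
      apply HasDerivAt.fun_sum
      intro j hj
      exact ((hβhas j t).log (hβne j hj t ht)).const_mul _
    have hveq : ∀ u ∈ Set.Ioo a b, v u = Real.exp (g u) := by
      intro u hu
      rw [hv, hg]
      simp only [Real.exp_sum]
      apply Finset.prod_congr rfl
      intro j hj
      rw [Real.exp_nat_mul, Real.exp_log (hβpos j hj u hu)]
    have hexp : HasDerivAt (fun u => Real.exp (g u)) (v t * W t) t := by
      rw [hveq t ht]
      exact hgd.exp
    apply hexp.congr_of_eventuallyEq
    exact Filter.eventuallyEq_of_mem (isOpen_Ioo.mem_nhds ht) hveq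
  have hvv : ∀ t ∈ Set.Ioo a b, deriv v t / v t = W t := by
    intro t ht
    rw [(hvhas t ht).deriv, mul_comm, mul_div_assoc, div_self (ne_of_gt (hvpos t ht)), mul_one]
  -- first-order ODE in explicit form
  have hα' : ∀ t ∈ Set.Ioo a b, deriv α t = ε * t + E - α t * (W t - κ1) := by
    intro t ht
    have := hode t ht
    rw [hvv t ht] at this
    linarith
  -- derivative of W
  have hWhas : ∀ t ∈ Set.Ioo a b,
      HasDerivAt W (∑ j ∈ Finset.Icc 1 r, (n j : ℝ) * (-(q j ^ 2) / (β j t) ^ 2)) t := by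
    intro t ht
    apply HasDerivAt.fun_sum
    intro j hj
    have h1 : HasDerivAt (fun u => -q j / β j u) (-(q j ^ 2) / (β j t) ^ 2) t := by
      have h2 := ((hβhas j t).inv (hβne j hj t ht)).const_mul (-q j)
      convert h2 using 1
      · rfl
      · rfl
      · funext u; simp [div_eq_mul_inv]
      · ring
    exact h1.const_mul _
  intro s hs i hi
  -- second derivative of α
  have hF : HasDerivAt (fun t => ε * t + E - α t * (W t - κ1))
      (ε - (deriv α s * (W s - κ1) + α s *
        ∑ j ∈ Finset.Icc 1 r, (n j : ℝ) * (-(q j ^ 2) / (β j s) ^ 2))) s := by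
    have h1 : HasDerivAt (fun t : ℝ => ε * t + E) ε s := by
      simpa using ((hasDerivAt_id s).const_mul ε).add_const E
    exact h1.sub (((hα1 s hs).hasDerivAt).mul ((hWhas s hs).sub_const κ1))
  have haa : deriv (deriv α) s = ε - (deriv α s * (W s - κ1) + α s *
      ∑ j ∈ Finset.Icc 1 r, (n j : ℝ) * (-(q j ^ 2) / (β j s) ^ 2)) := by
    have heq : deriv α =ᶠ[nhds s] (fun t => ε * t + E - α t * (W t - κ1)) :=
      Filter.eventuallyEq_of_mem (isOpen_Ioo.mem_nhds hs) hα'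
    rw [heq.deriv_eq]
    exact hF.deriv
  have hsum : ∑ j ∈ Finset.Icc 1 r, (n j : ℝ) * (-(q j ^ 2) / (β j s) ^ 2)
      = -∑ j ∈ Finset.Icc 1 r, (n j : ℝ) * q j ^ 2 / (β j s) ^ 2 := by
    rw [← Finset.sum_neg_distrib]
    exact Finset.sum_congr rfl fun j _ => by ring
  have key := hα' s hs
  have hE := hconsist i hi
  have hβval : β i s = -q i * (s + σ i) := by rw [hβ]
  have hqi := hq i hi
  have hsσ : s + σ i ≠ 0 := by
    intro h
    have := hβpos i hi s hs
    rw [hβval, h, mul_zero] at this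
    exact lt_irrefl 0 this
  have hφs : φ s = κ1 * (s + κ0) := by rw [hφ]
  refine ⟨?_, ?_, ?_, ?_⟩
  · -- (a)
    rw [hvv s hs, hβdd i s, hβd i, hφd s, key, hE, hβval]
    field_simp
    ring
  · -- (b)
    rw [haa, hsum, hvv s hs, hφd s]
    ring
  · -- (c)
    have hsum2 : ∑ j ∈ Finset.Icc 1 r, (n j : ℝ) *
        (deriv (deriv (β j)) s / β j s - (1 / 2) * (deriv (β j) s / β j s) ^ 2)
        = -(1 / 2) * ∑ j ∈ Finset.Icc 1 r, (n j : ℝ) * q j ^ 2 / (β j s) ^ 2 := by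
      rw [Finset.mul_sum]
      apply Finset.sum_congr rfl
      intro j hj
      rw [hβdd j s, hβd j s]
      ring
    rw [haa, hsum, hvv s hs, hsum2, hφdd s, hφd s]
    ring
  · -- (d)
    rw [hφdd s, hφd s, hvv s hs, key, hφs]
    ring
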